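/- For every integer λ ≥ 2, the tree T_λ (one central vertex of degree λ² − λ + 1, its neighbours of degree λ, all remaining vertices leaves) is λ-harmonic: its adjacency matrix A and degree vector d satisfy Ad = λd. -/

import Mathlib

open Matrix

/-- Vertex set of the harmonic tree `T_λ`: a center, `λ² - λ + 1` middle vertices,
and `λ - 1` leaves attached to each middle vertex. -/
abbrev TlamV (l : ℕ) : Type :=
  Unit ⊕ Fin (l ^ 2 - l + 1) ⊕ (Fin (l ^ 2 - l + 1) × Fin (l - 1))

/-- The harmonic tree `T_λ`: the center is adjacent to every middle vertex, and each
middle vertex `i` is adjacent to its `λ - 1` private leaves. -/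
def Tlam (l : ℕ) : SimpleGraph (TlamV l) :=
  SimpleGraph.fromRel (fun a b =>
    match a, b with
    | Sum.inl _, Sum.inr (Sum.inl _) => True
    | Sum.inr (Sum.inl i), Sum.inr (Sum.inr p) => p.1 = i
    | _, _ => False)

lemma card_fst_eq (n m : ℕ) (i : Fin n) :
    (Finset.univ.filter (fun x : Fin n × Fin m => x.1 = i)).card = m := by
  have h : Finset.univ.filter (fun x : Fin n × Fin m => x.1 = i)
      = {i} ×ˢ Finset.univ := by
    ext ⟨a, b⟩
    simp [eq_comm]
  simp [h]

theorem stmt_16 (l : ℕ) (hl : 2 ≤ l) [DecidableRel (Tlam l).Adj] :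
    ((Tlam l).adjMatrix ℝ).mulVec (((Tlam l).adjMatrix ℝ).mulVec (fun _ => (1 : ℝ))) =
      (l : ℝ) • ((Tlam l).adjMatrix ℝ).mulVec (fun _ => (1 : ℝ)) := by
  have h1 : (1:ℕ) ≤ l := by omega
  have h2 : l ≤ l ^ 2 := by nlinarith
  have hs : ∀ i : Fin (l ^ 2 - l + 1),
      (∑ x : Fin (l ^ 2 - l + 1), ∑ _x : Fin (l - 1), if x = i then (1:ℝ) else 0)
        = ((l - 1 : ℕ) : ℝ) := by
    intro i
    rw [Finset.sum_comm]
    simp [Finset.sum_ite_eq']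
  have hg : ((Tlam l).adjMatrix ℝ).mulVec (fun _ => (1:ℝ)) = fun x =>
      match x with
      | Sum.inl _ => ((l ^ 2 - l + 1 : ℕ) : ℝ)
      | Sum.inr (Sum.inl _) => (l : ℝ)
      | Sum.inr (Sum.inr _) => 1 := by
    funext x
    rcases x with u | i | p
    · simp only [mulVec, dotProduct, SimpleGraph.adjMatrix_apply]
      simp [mulVec, dotProduct, Fintype.sum_sum_type, Fintype.sum_prod_type, Tlam,
        SimpleGraph.fromRel_adj, -SimpleGraph.adjMatrix_mulVec_apply, -Finset.sum_boole]
    · simp only [mulVec, dotProduct, SimpleGraph.adjMatrix_apply]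
      simp [mulVec, dotProduct, Fintype.sum_sum_type, Fintype.sum_prod_type, Tlam,
        SimpleGraph.fromRel_adj, -SimpleGraph.adjMatrix_mulVec_apply, -Finset.sum_boole,
        Finset.sum_ite_eq', Finset.sum_ite_eq, card_fst_eq]
      rw [hs i, Nat.cast_sub h1]
      ring
    · simp only [mulVec, dotProduct, SimpleGraph.adjMatrix_apply]
      simp [mulVec, dotProduct, Fintype.sum_sum_type, Fintype.sum_prod_type, Tlam,
        SimpleGraph.fromRel_adj, -SimpleGraph.adjMatrix_mulVec_apply, -Finset.sum_boole,
        Finset.sum_ite_eq', Finset.sum_ite_eq]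
  rw [hg]
  funext x
  rcases x with u | i | p
  · simp only [mulVec, dotProduct, SimpleGraph.adjMatrix_apply]
    simp [mulVec, dotProduct, Fintype.sum_sum_type, Fintype.sum_prod_type, Tlam,
      SimpleGraph.fromRel_adj, -SimpleGraph.adjMatrix_mulVec_apply, -Finset.sum_boole,
      Nat.cast_sub h2]
    ring
  · simp only [mulVec, dotProduct, SimpleGraph.adjMatrix_apply]
    simp [mulVec, dotProduct, Fintype.sum_sum_type, Fintype.sum_prod_type, Tlam,
      SimpleGraph.fromRel_adj, -SimpleGraph.adjMatrix_mulVec_apply, -Finset.sum_boole,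
      Finset.sum_ite_eq', Finset.sum_ite_eq, card_fst_eq, Nat.cast_sub h2]
    rw [hs i, Nat.cast_sub h1]
    ring
  · simp only [mulVec, dotProduct, SimpleGraph.adjMatrix_apply]
    simp [mulVec, dotProduct, Fintype.sum_sum_type, Fintype.sum_prod_type, Tlam,
      SimpleGraph.fromRel_adj, -SimpleGraph.adjMatrix_mulVec_apply, -Finset.sum_boole,
      Finset.sum_ite_eq', Finset.sum_ite_eq]
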